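/- For any integer n ≥ 2 and any unit vectors |ψ⟩, |ψ'⟩ ∈ (ℂ²)^{⊗n}, the GME-concurrence satisfies |C_GME(|ψ⟩) − C_GME(|ψ'⟩)| ≤ 2^{3/4} · √(‖ψ − ψ'‖₁). -/

import Mathlib

open scoped BigOperators ComplexConjugate ComplexOrder

noncomputable section

namespace QIpaper

/-- Inner product `⟨ψ|φ⟩`, conjugate-linear in the first argument. -/
def braket {I : Type*} [Fintype I] (ψ φ : I → ℂ) : ℂ := ∑ x, conj (ψ x) * φ x

/-- Outer product `|ψ⟩⟨ψ|`. -/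
def dm {I : Type*} (ψ : I → ℂ) : Matrix I I ℂ := Matrix.of fun x y => ψ x * conj (ψ y)

open Classical in
/-- Positive semidefinite square root (junk value `0` on non-PSD matrices). -/
def psdSqrt {I : Type*} [Fintype I] [DecidableEq I] (A : Matrix I I ℂ) : Matrix I I ℂ :=
  if h : A.PosSemidef then
    h.1.eigenvectorUnitary.1 * Matrix.diagonal ((↑) ∘ (Real.sqrt ∘ h.1.eigenvalues)) *
      (star h.1.eigenvectorUnitary : Matrix I I ℂ) else 0

/-- The trace norm `‖A‖₁ = tr √(AᴴA)`. -/
def traceNorm {I : Type*} [Fintype I] [DecidableEq I] (A : Matrix I I ℂ) : ℝ :=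
  (psdSqrt (A.conjTranspose * A)).trace.re

/-- Fidelity `F(ρ,σ) = tr √(√ρ σ √ρ)`. -/
def fidelity {I : Type*} [Fintype I] [DecidableEq I] (ρ σ : Matrix I I ℂ) : ℝ :=
  (psdSqrt (psdSqrt ρ * σ * psdSqrt ρ)).trace.re

/-- Purity `tr(ρ²)`. -/
def purity {I : Type*} [Fintype I] (ρ : Matrix I I ℂ) : ℝ := ((ρ * ρ).trace).re

def sigmaX : Matrix (Fin 2) (Fin 2) ℂ := !![0, 1; 1, 0]
def sigmaY : Matrix (Fin 2) (Fin 2) ℂ := !![0, -Complex.I; Complex.I, 0]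
def sigmaZ : Matrix (Fin 2) (Fin 2) ℂ := !![1, 0; 0, -1]

/-- `σ_y^{⊗I}` on the qubits indexed by `I`. -/
def sigmaYn {I : Type*} [Fintype I] [DecidableEq I] : Matrix (I → Fin 2) (I → Fin 2) ℂ :=
  Matrix.of fun x y => ∏ k, sigmaY (x k) (y k)

/-- The `n`-tangle `τ(ψ) = |⟨ψ|σ_y^{⊗n}|ψ*⟩|`. -/
def tangle {I : Type*} [Fintype I] [DecidableEq I] (ψ : (I → Fin 2) → ℂ) : ℝ :=
  ‖∑ x, ∑ y, conj (ψ x) * sigmaYn x y * conj (ψ y)‖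

/-- Entrywise complex conjugate of a matrix. -/
def conjM {I J : Type*} (ρ : Matrix I J ℂ) : Matrix I J ℂ := Matrix.of fun x y => conj (ρ x y)

/-- `ρ̃ = σ_y^{⊗n} ρ* σ_y^{⊗n}`. -/
def tildeM {I : Type*} [Fintype I] [DecidableEq I] (ρ : Matrix (I → Fin 2) (I → Fin 2) ℂ) :
    Matrix (I → Fin 2) (I → Fin 2) ℂ := sigmaYn * conjM ρ * sigmaYn

/-- The Wootters tilde `|ψ̃⟩ = σ_y^{⊗n}|ψ*⟩`. -/
def wtilde {I : Type*} [Fintype I] [DecidableEq I] (ψ : (I → Fin 2) → ℂ) : (I → Fin 2) → ℂ :=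
  sigmaYn.mulVec (fun x => conj (ψ x))

/-- Reduced density matrix of the pure state `ψ` on the qubits in `s`
(tracing out the complement). -/
def reduced {n : ℕ} (s : Finset (Fin n)) (ψ : (Fin n → Fin 2) → ℂ) :
    Matrix ({i : Fin n // i ∈ s} → Fin 2) ({i : Fin n // i ∈ s} → Fin 2) ℂ :=
  Matrix.of fun a b => ∑ c : {i : Fin n // i ∉ s} → Fin 2,
    ψ (fun i => if h : i ∈ s then a ⟨i, h⟩ else c ⟨i, h⟩) *
    conj (ψ (fun i => if h : i ∈ s then b ⟨i, h⟩ else c ⟨i, h⟩))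

/-- GME-concurrence `C_GME(ψ) = min_{∅ ⊊ γ ⊊ [n]} √(2(1 − tr ψ_γ²))`. -/
def gme {n : ℕ} (ψ : (Fin n → Fin 2) → ℂ) : ℝ :=
  sInf {r : ℝ | ∃ γ : Finset (Fin n), γ ≠ ∅ ∧ γ ≠ Finset.univ ∧
    r = Real.sqrt (2 * (1 - purity (reduced γ ψ)))}

/-- Concentratable entanglement `C(ψ; s) = 1 − 2^{−|s|} Σ_{γ⊆s} tr(ψ_γ²)`. -/
def CE {n : ℕ} (ψ : (Fin n → Fin 2) → ℂ) (s : Finset (Fin n)) : ℝ :=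
  1 - (1 / 2 ^ s.card) * ∑ γ ∈ s.powerset, purity (reduced γ ψ)

/-- The subnormalized post-measurement vector `(⟨v|⊗I)|Ψ⟩`. -/
def contract {IA IB : Type*} [Fintype IA] (v : IA → ℂ) (Ψ : IA × IB → ℂ) : IB → ℂ :=
  fun y => ∑ x, conj (v x) * Ψ (x, y)

/-- Probability `p_v = ⟨Ψ|(|v⟩⟨v| ⊗ I)|Ψ⟩` of outcome `v`. -/
def prob {IA IB : Type*} [Fintype IA] [Fintype IB] (v : IA → ℂ) (Ψ : IA × IB → ℂ) : ℝ :=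
  (braket (contract v Ψ) (contract v Ψ)).re

/-- Normalized post-measurement state (the zero vector when the probability vanishes). -/
def postState {IA IB : Type*} [Fintype IA] [Fintype IB] (v : IA → ℂ) (Ψ : IA × IB → ℂ) :
    IB → ℂ := fun y => ((Real.sqrt (prob v Ψ) : ℂ))⁻¹ * contract v Ψ y

/-- `b` is an orthonormal family. (An orthonormal family indexed by the space's own
index type is an orthonormal basis.) -/
def ONB {J I : Type*} [Fintype I] [DecidableEq J] (b : J → I → ℂ) : Prop :=
  ∀ i j, braket (b i) (b j) = if i = j then 1 else 0

/-- Average post-measurement entanglement `Ē_β(Ψ) = Σ_i p_i E(φ_i)`. -/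
def avgE {ι IA IB : Type*} [Fintype ι] [Fintype IA] [Fintype IB]
    (E : (IB → ℂ) → ℝ) (b : ι → IA → ℂ) (Ψ : IA × IB → ℂ) : ℝ :=
  ∑ i, prob (b i) Ψ * E (postState (b i) Ψ)

/-- Multipartite entanglement of assistance: supremum of `Ē_β` over all
orthonormal bases `β` of `H_A`. -/
def Lglobal {IA IB : Type*} [Fintype IA] [Fintype IB] [DecidableEq IA]
    (E : (IB → ℂ) → ℝ) (Ψ : IA × IB → ℂ) : ℝ :=
  sSup {r : ℝ | ∃ b : IA → IA → ℂ, ONB b ∧ r = avgE E b Ψ}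

/-- Tensor-product basis of `(ℂ²)^{⊗K}` built from single-qubit bases. -/
def productBasis {K : Type*} [Fintype K] (q : K → Fin 2 → Fin 2 → ℂ) :
    (K → Fin 2) → (K → Fin 2) → ℂ :=
  fun i x => ∏ k, q k (i k) (x k)

/-- Localizable multipartite entanglement: supremum of `Ē_β` over product bases of
single-qubit orthonormal bases of `H_A = (ℂ²)^{⊗K}`. -/
def Lloc {K IB : Type*} [Fintype K] [DecidableEq K] [Fintype IB]
    (E : (IB → ℂ) → ℝ) (Ψ : (K → Fin 2) × IB → ℂ) : ℝ :=
  sSup {r : ℝ | ∃ q : K → Fin 2 → Fin 2 → ℂ, (∀ k, ONB (q k)) ∧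
    r = avgE E (productBasis q) Ψ}

/-- Partial trace over the `A` system of `|Ψ⟩⟨Ψ|`. -/
def ptraceA {IA IB : Type*} [Fintype IA] (Ψ : IA × IB → ℂ) : Matrix IB IB ℂ :=
  Matrix.of fun y y' => ∑ x, Ψ (x, y) * conj (Ψ (x, y'))

/-- Reduced density matrix of `|Ψ⟩⟨Ψ|` on the subset `s` of the `B` qubits. -/
def reducedB {IA : Type*} [Fintype IA] {n : ℕ} (s : Finset (Fin n))
    (Ψ : IA × (Fin n → Fin 2) → ℂ) :
    Matrix ({i : Fin n // i ∈ s} → Fin 2) ({i : Fin n // i ∈ s} → Fin 2) ℂ :=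
  Matrix.of fun a b => ∑ x : IA, ∑ c : {i : Fin n // i ∉ s} → Fin 2,
    Ψ (x, fun i => if h : i ∈ s then a ⟨i, h⟩ else c ⟨i, h⟩) *
    conj (Ψ (x, fun i => if h : i ∈ s then b ⟨i, h⟩ else c ⟨i, h⟩))



section Aux

variable {I : Type*} [Fintype I]

lemma braket_conj (u v : I → ℂ) : conj (braket u v) = braket v u := by
  unfold braket
  rw [map_sum]
  exact Finset.sum_congr rfl fun x _ => by simp; ring

lemma braket_self_re (u : I → ℂ) : braket u u = ((braket u u).re : ℂ) :=
  (Complex.conj_eq_iff_re.mp (braket_conj u u)).symm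

lemma braket_self_nonneg (u : I → ℂ) : 0 ≤ (braket u u).re := by
  have : (braket u u) = ∑ x, (Complex.normSq (u x) : ℂ) := by
    unfold braket
    exact Finset.sum_congr rfl fun x _ => by rw [mul_comm, Complex.mul_conj]
  rw [this, Complex.re_sum]
  exact Finset.sum_nonneg fun x _ => by simpa using Complex.normSq_nonneg (u x)

lemma braket_as_inner (u v : I → ℂ) :
    braket u v = inner (𝕜 := ℂ) ((WithLp.equiv 2 (I → ℂ)).symm u) ((WithLp.equiv 2 (I → ℂ)).symm v) := by
  simp [braket, PiLp.inner_apply, RCLike.inner_apply]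
  exact Finset.sum_congr rfl fun x _ => mul_comm _ _

lemma abs_braket_le (u v : I → ℂ) :
    ‖braket u v‖ ≤ Real.sqrt (braket u u).re * Real.sqrt (braket v v).re := by
  rw [braket_as_inner u v]
  calc ‖inner (𝕜 := ℂ) ((WithLp.equiv 2 (I → ℂ)).symm u) ((WithLp.equiv 2 (I → ℂ)).symm v)‖
      ≤ ‖((WithLp.equiv 2 (I → ℂ)).symm u)‖ * ‖((WithLp.equiv 2 (I → ℂ)).symm v)‖ := by
        exact norm_inner_le_norm _ _
    _ = _ := by
        rw [norm_eq_sqrt_re_inner (𝕜 := ℂ), norm_eq_sqrt_re_inner (𝕜 := ℂ), ← braket_as_inner, ← braket_as_inner]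
        rfl

lemma abs_braket_le_one {ψ ψ' : I → ℂ}
    (hψ : braket ψ ψ = 1) (hψ' : braket ψ' ψ' = 1) :
    ‖braket ψ ψ'‖ ≤ 1 := by
  have h := abs_braket_le ψ ψ'
  rw [hψ, hψ'] at h
  simpa using h

lemma braket_comp_perm (σ : I → I) (hσ : Function.Bijective σ) (u v : I → ℂ) :
    braket (u ∘ σ) (v ∘ σ) = braket u v := by
  unfold braket
  exact Fintype.sum_bijective σ hσ _ _ (fun x => rfl)

lemma braket_swap_inv (σ : I → I) (hσ : ∀ z, σ (σ z) = z) (u v : I → ℂ) :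
    braket (v ∘ σ) u = conj (braket (u ∘ σ) v) := by
  rw [braket_conj]
  unfold braket
  exact Fintype.sum_bijective σ (Function.Involutive.bijective hσ) _ _
    (fun x => by simp [Function.comp, hσ x])

lemma braket_add_self (a b : I → ℂ) :
    braket (fun z => a z + b z) (fun z => a z + b z)
      = braket a a + braket a b + braket b a + braket b b := by
  unfold braket
  rw [← Finset.sum_add_distrib, ← Finset.sum_add_distrib, ← Finset.sum_add_distrib]
  exact Finset.sum_congr rfl fun x _ => by simp only [map_add]; ring

lemma braket_sub_self (a b : I → ℂ) :
    braket (fun z => a z - b z) (fun z => a z - b z)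
      = braket a a - braket a b - braket b a + braket b b := by
  unfold braket
  rw [← Finset.sum_sub_distrib, ← Finset.sum_sub_distrib, ← Finset.sum_add_distrib]
  exact Finset.sum_congr rfl fun x _ => by simp only [map_sub]; ring

lemma swap_key {E : Type*} [Fintype E] (σ : E → E) (hσ : ∀ z, σ (σ z) = z)
    (Φ Φ' : E → ℂ) (h1 : braket Φ Φ = 1) (h2 : braket Φ' Φ' = 1) :
    ‖braket (Φ ∘ σ) Φ - braket (Φ' ∘ σ) Φ'‖
      ≤ 2 * Real.sqrt (1 - ‖braket Φ Φ'‖ ^ 2) := by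
  have hbij := Function.Involutive.bijective hσ
  set d : ℂ := braket Φ Φ' with hd
  set s : ℝ := ‖d‖ with hs
  have hs0 : 0 ≤ s := norm_nonneg d
  set w : ℂ := if d = 0 then 1 else conj d / (s : ℂ) with hw
  have habs : (s : ℂ) * (s : ℂ) = conj d * d := by
    rw [mul_comm (conj d) d, Complex.mul_conj, Complex.normSq_eq_norm_sq]
    rw [hs]; push_cast; ring
  have hws : w * d = (s : ℂ) := by
    by_cases h : d = 0
    · simp [hw, h, hs]
    · have hsne : (s : ℂ) ≠ 0 := by
        simpa [hs] using Complex.ofReal_ne_zero.mpr (norm_ne_zero_iff.mpr h)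
      rw [hw, if_neg h]
      field_simp
      linear_combination -habs
  have hww : conj w * w = 1 := by
    by_cases h : d = 0
    · simp [hw, h]
    · have hsne : (s : ℂ) ≠ 0 := by
        simpa [hs] using Complex.ofReal_ne_zero.mpr (norm_ne_zero_iff.mpr h)
      rw [hw, if_neg h, map_div₀, Complex.conj_conj, Complex.conj_ofReal]
      field_simp
      linear_combination -habs
  set Ψ : E → ℂ := fun z => w * Φ' z with hΨ
  set u : E → ℂ := fun z => Φ z + Ψ z with hu
  set v : E → ℂ := fun z => Φ z - Ψ z with hv
  have hqΨ : braket (Ψ ∘ σ) Ψ = braket (Φ' ∘ σ) Φ' := by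
    unfold braket
    refine Finset.sum_congr rfl fun x _ => ?_
    simp only [hΨ, Function.comp_apply, map_mul]
    linear_combination (conj (Φ' (σ x)) * Φ' x) * hww
  have hpol : braket (u ∘ σ) v + braket (v ∘ σ) u
      = 2 * (braket (Φ ∘ σ) Φ - braket (Ψ ∘ σ) Ψ) := by
    unfold braket
    rw [← Finset.sum_add_distrib, ← Finset.sum_sub_distrib, Finset.mul_sum]
    refine Finset.sum_congr rfl fun x _ => ?_
    simp only [hu, hv, Function.comp_apply, map_add, map_sub]
    ring
  have hherm : braket (v ∘ σ) u = conj (braket (u ∘ σ) v) := braket_swap_inv σ hσ u v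
  set B : ℂ := braket (u ∘ σ) v with hB
  have hdiff : braket (Φ ∘ σ) Φ - braket (Φ' ∘ σ) Φ' = ((B.re : ℂ)) := by
    rw [← hqΨ]
    have hthis : (2 : ℂ) * (braket (Φ ∘ σ) Φ - braket (Ψ ∘ σ) Ψ) = 2 * ((B.re : ℂ)) := by
      rw [← hpol, hherm, Complex.add_conj]
      push_cast
      ring
    exact mul_left_cancel₀ two_ne_zero hthis
  have hΦΨ : braket Φ Ψ = (s : ℂ) := by
    have hlin : braket Φ Ψ = w * braket Φ Φ' := by
      unfold braket
      rw [Finset.mul_sum]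
      exact Finset.sum_congr rfl fun x _ => by simp only [hΨ]; ring
    rw [hlin, ← hd, hws]
  have hΨΦ : braket Ψ Φ = (s : ℂ) := by
    rw [← braket_conj Φ Ψ, hΦΨ, Complex.conj_ofReal]
  have hΨΨ : braket Ψ Ψ = 1 := by
    have : braket Ψ Ψ = conj w * w * braket Φ' Φ' := by
      unfold braket
      rw [Finset.mul_sum]
      exact Finset.sum_congr rfl fun x _ => by simp only [hΨ, map_mul]; ring
    rw [this, hww, h2, one_mul]
  have huu : (braket u u).re = 2 + 2 * s := by
    have : braket u u = ((2 + 2 * s : ℝ) : ℂ) := by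
      rw [hu]
      rw [braket_add_self Φ Ψ, h1, hΦΨ, hΨΦ, hΨΨ]
      push_cast; ring
    rw [this, Complex.ofReal_re]
  have hvv : (braket v v).re = 2 - 2 * s := by
    have : braket v v = ((2 - 2 * s : ℝ) : ℂ) := by
      rw [hv]
      rw [braket_sub_self Φ Ψ, h1, hΦΨ, hΨΦ, hΨΨ]
      push_cast; ring
    rw [this, Complex.ofReal_re]
  have huσ : braket (u ∘ σ) (u ∘ σ) = braket u u := braket_comp_perm σ hbij u u
  calc ‖braket (Φ ∘ σ) Φ - braket (Φ' ∘ σ) Φ'‖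
      = ‖(B.re : ℂ)‖ := by rw [hdiff]
    _ = |B.re| := by rw [Complex.norm_real, Real.norm_eq_abs]
    _ ≤ ‖B‖ := Complex.abs_re_le_norm B
    _ ≤ Real.sqrt (braket (u ∘ σ) (u ∘ σ)).re * Real.sqrt (braket v v).re := abs_braket_le _ _
    _ = Real.sqrt (2 + 2 * s) * Real.sqrt (2 - 2 * s) := by rw [huσ, huu, hvv]
    _ = Real.sqrt ((2 + 2 * s) * (2 - 2 * s)) := by
        rw [← Real.sqrt_mul (by linarith : (0:ℝ) ≤ 2 + 2 * s)]
    _ = Real.sqrt (4 * (1 - s ^ 2)) := by ring_nf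
    _ = 2 * Real.sqrt (1 - s ^ 2) := by
        rw [Real.sqrt_mul (by norm_num : (0:ℝ) ≤ 4),
          show Real.sqrt 4 = 2 by
            rw [show (4:ℝ) = 2 ^ 2 by norm_num, Real.sqrt_sq (by norm_num : (0:ℝ) ≤ 2)]]

-- ## Reduction of purity to a swap form

variable {n : ℕ}

def mfun (γ : Finset (Fin n)) (x y : Fin n → Fin 2) : Fin n → Fin 2 :=
  fun i => if i ∈ γ then x i else y i

def glue (γ : Finset (Fin n)) (a : {i : Fin n // i ∈ γ} → Fin 2)
    (c : {i : Fin n // i ∉ γ} → Fin 2) : Fin n → Fin 2 :=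
  fun i => if h : i ∈ γ then a ⟨i, h⟩ else c ⟨i, h⟩

def glueEquiv (γ : Finset (Fin n)) :
    (({i : Fin n // i ∈ γ} → Fin 2) × ({i : Fin n // i ∉ γ} → Fin 2)) ≃ (Fin n → Fin 2) where
  toFun p := glue γ p.1 p.2
  invFun x := (fun j => x j.1, fun j => x j.1)
  left_inv := by
    rintro ⟨a, c⟩
    refine Prod.ext ?_ ?_ <;> funext j
    · simp [glue, j.2]
    · simp [glue, j.2]
  right_inv := by
    intro x
    funext i
    by_cases h : i ∈ γ <;> simp [glue, h]

lemma mfun_glue₁ (γ : Finset (Fin n)) (a b : {i : Fin n // i ∈ γ} → Fin 2)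
    (c c' : {i : Fin n // i ∉ γ} → Fin 2) :
    mfun γ (glue γ b c') (glue γ a c) = glue γ b c := by
  funext i
  by_cases h : i ∈ γ <;> simp [mfun, glue, h]

lemma mfun_glue₂ (γ : Finset (Fin n)) (a b : {i : Fin n // i ∈ γ} → Fin 2)
    (c c' : {i : Fin n // i ∉ γ} → Fin 2) :
    mfun γ (glue γ a c) (glue γ b c') = glue γ a c' := by
  funext i
  by_cases h : i ∈ γ <;> simp [mfun, glue, h]

def swapγ (γ : Finset (Fin n)) :
    (Fin n → Fin 2) × (Fin n → Fin 2) → (Fin n → Fin 2) × (Fin n → Fin 2) :=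
  fun p => (mfun γ p.2 p.1, mfun γ p.1 p.2)

lemma swapγ_invol (γ : Finset (Fin n)) : ∀ p, swapγ γ (swapγ γ p) = p := by
  rintro ⟨x, y⟩
  refine Prod.ext ?_ ?_ <;> funext i <;> by_cases h : i ∈ γ <;> simp [swapγ, mfun, h]

def Phi (ψ : (Fin n → Fin 2) → ℂ) : (Fin n → Fin 2) × (Fin n → Fin 2) → ℂ :=
  fun p => ψ p.1 * ψ p.2

lemma purity_eq (γ : Finset (Fin n)) (ψ : (Fin n → Fin 2) → ℂ) :
    purity (reduced γ ψ) = (braket (Phi ψ ∘ swapγ γ) (Phi ψ)).re := by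
  have key : ((reduced γ ψ * reduced γ ψ).trace) = braket (Phi ψ ∘ swapγ γ) (Phi ψ) := by
    have lhs_eq : ((reduced γ ψ * reduced γ ψ).trace)
        = ∑ a, ∑ b, ∑ c, ∑ c',
            (ψ (glue γ a c) * conj (ψ (glue γ b c)))
              * (ψ (glue γ b c') * conj (ψ (glue γ a c'))) := by
      rw [Matrix.trace]
      simp only [Matrix.diag_apply, Matrix.mul_apply, reduced, Matrix.of_apply]
      refine Finset.sum_congr rfl fun a _ => Finset.sum_congr rfl fun b _ => ?_
      rw [Finset.sum_mul_sum]
      exact Finset.sum_congr rfl fun c _ => Finset.sum_congr rfl fun c' _ => rfl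
    have rhs_eq : braket (Phi ψ ∘ swapγ γ) (Phi ψ)
        = ∑ a, ∑ c, ∑ b, ∑ c',
            (ψ (glue γ a c) * conj (ψ (glue γ b c)))
              * (ψ (glue γ b c') * conj (ψ (glue γ a c'))) := by
      unfold braket
      rw [Fintype.sum_prod_type]
      rw [← Equiv.sum_comp (glueEquiv γ)
        (fun x => ∑ y, conj ((Phi ψ ∘ swapγ γ) (x, y)) * Phi ψ (x, y))]
      rw [Fintype.sum_prod_type]
      refine Finset.sum_congr rfl fun a _ => Finset.sum_congr rfl fun c _ => ?_
      rw [← Equiv.sum_comp (glueEquiv γ)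
        (fun y => conj ((Phi ψ ∘ swapγ γ) (glueEquiv γ (a, c), y))
          * Phi ψ (glueEquiv γ (a, c), y))]
      rw [Fintype.sum_prod_type]
      refine Finset.sum_congr rfl fun b _ => Finset.sum_congr rfl fun c' _ => ?_
      show conj (Phi ψ (swapγ γ (glue γ a c, glue γ b c'))) * Phi ψ (glue γ a c, glue γ b c') = _
      have e1 : swapγ γ (glue γ a c, glue γ b c') = (glue γ b c, glue γ a c') := by
        refine Prod.ext ?_ ?_
        · exact mfun_glue₁ γ a b c c'
        · exact mfun_glue₂ γ a b c c'
      rw [e1]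
      simp only [Phi, map_mul]
      ring
    rw [lhs_eq, rhs_eq]
    refine Finset.sum_congr rfl fun a _ => ?_
    exact Finset.sum_comm
  unfold purity
  rw [key]


lemma braket_Phi (ψ ψ' : (Fin n → Fin 2) → ℂ) :
    braket (Phi ψ) (Phi ψ') = braket ψ ψ' * braket ψ ψ' := by
  unfold braket Phi
  rw [Fintype.sum_prod_type, Finset.sum_mul_sum]
  exact Finset.sum_congr rfl fun x _ => Finset.sum_congr rfl fun y _ => by
    simp only [map_mul]; ring

lemma purity_diff {ψ ψ' : (Fin n → Fin 2) → ℂ}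
    (hψ : braket ψ ψ = 1) (hψ' : braket ψ' ψ' = 1) (γ : Finset (Fin n)) :
    |purity (reduced γ ψ) - purity (reduced γ ψ')|
      ≤ 2 * Real.sqrt (2 * (1 - ‖braket ψ ψ'‖ ^ 2)) := by
  have h1 : braket (Phi ψ) (Phi ψ) = 1 := by rw [braket_Phi, hψ, one_mul]
  have h2 : braket (Phi ψ') (Phi ψ') = 1 := by rw [braket_Phi, hψ', one_mul]
  have hkey := swap_key (swapγ γ) (swapγ_invol γ) (Phi ψ) (Phi ψ') h1 h2
  set s : ℝ := ‖braket ψ ψ'‖ with hs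
  have hs0 : 0 ≤ s := norm_nonneg _
  have hs1 : s ≤ 1 := abs_braket_le_one hψ hψ'
  have habsPhi : ‖braket (Phi ψ) (Phi ψ')‖ ^ 2 = s ^ 4 := by
    rw [braket_Phi, norm_mul, ← hs]; ring
  rw [habsPhi] at hkey
  have hre : |purity (reduced γ ψ) - purity (reduced γ ψ')|
      ≤ ‖braket (Phi ψ ∘ swapγ γ) (Phi ψ) - braket (Phi ψ' ∘ swapγ γ) (Phi ψ')‖ := by
    rw [purity_eq γ ψ, purity_eq γ ψ', ← Complex.sub_re]
    exact Complex.abs_re_le_norm _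
  refine hre.trans (hkey.trans ?_)
  have hmono : Real.sqrt (1 - s ^ 4) ≤ Real.sqrt (2 * (1 - s ^ 2)) := by
    apply Real.sqrt_le_sqrt
    nlinarith [sq_nonneg (1 - s ^ 2)]
  linarith


-- ## Trace norm of a difference of pure states

section TraceNorm
variable {I : Type*} [Fintype I]

def outerP (a b : I → ℂ) : Matrix I I ℂ := Matrix.of fun x y => a x * conj (b y)

lemma dm_eq_outerP (a : I → ℂ) : dm a = outerP a a := rfl

lemma outerP_mul (a b c d : I → ℂ) :
    outerP a b * outerP c d = braket b c • outerP a d := by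
  ext x y
  simp only [Matrix.mul_apply, outerP, Matrix.of_apply, Matrix.smul_apply, braket,
    smul_eq_mul]
  rw [Finset.sum_mul]
  exact Finset.sum_congr rfl fun z _ => by ring

lemma outerP_herm (a : I → ℂ) : (outerP a a).conjTranspose = outerP a a := by
  ext x y
  simp only [Matrix.conjTranspose_apply, outerP, Matrix.of_apply, star_mul', map_mul,
    Complex.conj_conj, Complex.star_def]
  ring

lemma outerP_posSemidef (a : I → ℂ) : (outerP a a).PosSemidef := by
  refine Matrix.PosSemidef.of_dotProduct_mulVec_nonneg (outerP_herm a) ?_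
  · intro x
    have hcalc : dotProduct (star x) ((outerP a a).mulVec x)
        = braket x a * conj (braket x a) := by
      simp only [dotProduct, Matrix.mulVec, outerP, Matrix.of_apply, Pi.star_apply,
        braket, Complex.star_def]
      rw [map_sum, Finset.sum_mul]
      refine Finset.sum_congr rfl fun i _ => ?_
      rw [Finset.mul_sum, Finset.mul_sum]
      refine Finset.sum_congr rfl fun j _ => ?_
      simp only [map_mul, Complex.conj_conj]
      ring
    rw [hcalc]
    simpa using star_mul_self_nonneg (conj (braket x a))

lemma braket_sub_right (u v w : I → ℂ) :
    braket u (fun z => v z - w z) = braket u v - braket u w := by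
  unfold braket
  rw [← Finset.sum_sub_distrib]
  exact Finset.sum_congr rfl fun x _ => by ring

lemma braket_smul_right (t : ℂ) (u v : I → ℂ) :
    braket u (fun z => t * v z) = t * braket u v := by
  unfold braket
  rw [Finset.mul_sum]
  exact Finset.sum_congr rfl fun x _ => by ring

lemma braket_smul_left (t : ℂ) (u v : I → ℂ) :
    braket (fun z => t * u z) v = conj t * braket u v := by
  unfold braket
  rw [Finset.mul_sum]
  exact Finset.sum_congr rfl fun x _ => by simp only [map_mul]; ring

lemma braket_sub_left (u v w : I → ℂ) :
    braket (fun z => u z - v z) w = braket u w - braket v w := by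
  unfold braket
  rw [← Finset.sum_sub_distrib]
  exact Finset.sum_congr rfl fun x _ => by simp only [map_sub]; ring

lemma trace_outerP (a : I → ℂ) : (outerP a a).trace = braket a a := by
  unfold Matrix.trace braket
  exact Finset.sum_congr rfl fun x _ => by simp [outerP, Matrix.diag_apply]; ring

open scoped MatrixOrder in
lemma psdSqrt_eq_cfcSqrt [DecidableEq I] {A : Matrix I I ℂ} (h : A.PosSemidef) :
    psdSqrt A = CFC.sqrt A := by
  rw [CFC.sqrt_eq_cfc, cfc_nnreal_eq_real _ A h.nonneg, h.1.cfc_eq]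
  simp only [psdSqrt, dif_pos h, Matrix.IsHermitian.cfc, Unitary.conjStarAlgAut_apply]
  congr 3
  funext i
  simp [Real.coe_sqrt, h.eigenvalues_nonneg i]

lemma posSemidef_trace_re_nonneg [DecidableEq I] {A : Matrix I I ℂ} (hA : A.PosSemidef) :
    0 ≤ A.trace.re := by
  have hdiag : ∀ i, 0 ≤ (A i i).re := by
    intro i
    have h := hA.dotProduct_mulVec_nonneg (Pi.single i 1)
    have hval : dotProduct (star (Pi.single i 1)) (A.mulVec (Pi.single i 1)) = A i i := by
      simp [dotProduct, Matrix.mulVec, Pi.single_apply]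
    rw [hval] at h
    exact (Complex.le_def.mp h).1
  unfold Matrix.trace
  rw [Complex.re_sum]
  exact Finset.sum_nonneg fun i _ => hdiag i

open scoped MatrixOrder in
lemma traceNorm_nonneg' [DecidableEq I] (A : Matrix I I ℂ) : 0 ≤ traceNorm A := by
  unfold traceNorm
  rw [psdSqrt_eq_cfcSqrt (Matrix.posSemidef_conjTranspose_mul_self A)]
  exact posSemidef_trace_re_nonneg
    (Matrix.nonneg_iff_posSemidef.mp (CFC.sqrt_nonneg _))

open scoped MatrixOrder in
lemma traceNorm_lower [DecidableEq I] (ψ ψ' : I → ℂ)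
    (hψ : braket ψ ψ = 1) (hψ' : braket ψ' ψ' = 1) :
    2 * Real.sqrt (1 - ‖braket ψ ψ'‖ ^ 2) ≤ traceNorm (dm ψ - dm ψ') := by
  set c : ℂ := braket ψ ψ' with hc
  set s : ℝ := ‖c‖ with hs
  have hs1 : s ≤ 1 := abs_braket_le_one hψ hψ'
  have hs0 : (0:ℝ) ≤ 1 - s ^ 2 := by nlinarith [norm_nonneg c]
  set lr : ℝ := Real.sqrt (1 - s ^ 2) with hlr
  have hlrsq : lr ^ 2 = 1 - s ^ 2 := Real.sq_sqrt hs0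
  have hccbar : c * conj c = ((s ^ 2 : ℝ) : ℂ) := by
    rw [Complex.mul_conj, hs, Complex.normSq_eq_norm_sq]
  rcases eq_or_lt_of_le (Real.sqrt_nonneg (1 - s ^ 2)) with hzero | hpos
  · rw [← hlr] at hzero
    rw [← hzero, mul_zero]
    exact traceNorm_nonneg' _
  · -- main case : lr > 0
    rw [← hlr] at hpos
    set lam : ℂ := ((lr : ℝ) : ℂ) with hlam
    have hlamne : lam ≠ 0 := by
      simpa [hlam] using Complex.ofReal_ne_zero.mpr (ne_of_gt hpos)
    have hrel : lam * lam = 1 - c * conj c := by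
      rw [hlam, hccbar, ← Complex.ofReal_mul]
      rw [show lr * lr = 1 - s ^ 2 by nlinarith]
      push_cast; ring
    set r : ℂ := ((Real.sqrt lr : ℝ) : ℂ) with hr
    have hrr : r * r = lam := by
      rw [hr, hlam, ← Complex.ofReal_mul, Real.mul_self_sqrt (le_of_lt hpos)]
    have hrne : r ≠ 0 := by
      simp only [hr]
      exact Complex.ofReal_ne_zero.mpr (ne_of_gt (Real.sqrt_pos.mpr hpos))
    set v : I → ℂ := fun x => ψ' x - c * ψ x with hv
    set a : I → ℂ := fun x => r * ψ x with ha
    set b : I → ℂ := fun x => r⁻¹ * v x with hb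
    set B : Matrix I I ℂ := outerP a a + outerP b b with hB
    have hψv : braket ψ v = 0 := by
      rw [hv]
      rw [braket_sub_right, braket_smul_right, hψ, mul_one, ← hc, sub_self]
    have hvψ : braket v ψ = 0 := by
      rw [← braket_conj, hψv, map_zero]
    have hvv : braket v v = lam * lam := by
      have e1 : braket v v = braket ψ' v - conj c * braket ψ v := by
        rw [hv]
        rw [braket_sub_left, braket_smul_left]
      rw [e1, hψv, mul_zero, sub_zero, hv, braket_sub_right, braket_smul_right, hψ']
      rw [← braket_conj ψ ψ']
      linear_combination -hrel
    have hconj_r : conj r = r := by rw [hr, Complex.conj_ofReal]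
    have haa : braket a a = lam := by
      rw [ha, braket_smul_left, braket_smul_right, hψ, hconj_r, mul_one, hrr]
    have hbb : braket b b = lam := by
      rw [hb, braket_smul_left, braket_smul_right, hvv]
      rw [map_inv₀, hconj_r, ← hrr]
      field_simp
    have hab : braket a b = 0 := by
      rw [ha, hb, braket_smul_left, braket_smul_right, hψv]
      ring
    have hba : braket b a = 0 := by
      rw [← braket_conj, hab, map_zero]
    have hBpsd : B.PosSemidef := (outerP_posSemidef a).add (outerP_posSemidef b)
    set Δ : Matrix I I ℂ := dm ψ - dm ψ' with hΔ
    have hΔherm : Δ.conjTranspose = Δ := by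
      rw [hΔ, Matrix.conjTranspose_sub, dm_eq_outerP, dm_eq_outerP, outerP_herm, outerP_herm]
    have hBsq : B ^ 2 = Δ.conjTranspose * Δ := by
      rw [hΔherm, pow_two, hB, hΔ, dm_eq_outerP, dm_eq_outerP]
      rw [add_mul, mul_add, mul_add, sub_mul, mul_sub, mul_sub]
      rw [outerP_mul, outerP_mul, outerP_mul, outerP_mul, outerP_mul, outerP_mul,
        outerP_mul, outerP_mul]
      rw [haa, hbb, hab, hba, hψ, hψ', ← hc, ← braket_conj ψ ψ', ← hc]
      ext x y
      simp only [Matrix.add_apply, Matrix.sub_apply, Matrix.smul_apply, outerP,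
        Matrix.of_apply, smul_eq_mul, zero_smul, one_smul, Matrix.zero_apply, add_zero,
        zero_add, ha, hb, hv, map_mul, map_sub, hconj_r, Complex.conj_conj]
      rw [map_inv₀, hconj_r]
      have hinv2 : lam * (r⁻¹ * r⁻¹) = 1 := by
        rw [← hrr]; field_simp
      linear_combination (lam * (ψ x) * conj (ψ y)) * hrr
        + ((ψ' x - c * ψ x) * (conj (ψ' y) - conj c * conj (ψ y))) * hinv2
        + ((ψ x) * conj (ψ y)) * hrel
    have hAB : ((dm ψ - dm ψ').conjTranspose * (dm ψ - dm ψ')).PosSemidef :=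
      Matrix.posSemidef_conjTranspose_mul_self _
    have hBsqrt : psdSqrt ((dm ψ - dm ψ').conjTranspose * (dm ψ - dm ψ')) = B := by
      rw [psdSqrt_eq_cfcSqrt hAB, ← hBsq, CFC.sqrt_sq B (Matrix.nonneg_iff_posSemidef.mpr hBpsd)]
    have htn : traceNorm (dm ψ - dm ψ') = B.trace.re := by
      unfold traceNorm
      rw [hBsqrt]
    have htrB : B.trace.re = 2 * lr := by
      rw [hB, Matrix.trace_add, trace_outerP, trace_outerP, haa, hbb, hlam]
      rw [Complex.add_re, Complex.ofReal_re]
      ring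
    rw [htn, htrB]
end TraceNorm

-- ## Square root difference bound

lemma sqrt_sub_sqrt_le (a b : ℝ) : Real.sqrt a - Real.sqrt b ≤ Real.sqrt |a - b| := by
  rcases le_or_gt a b with hab | hab
  · have h1 : Real.sqrt a ≤ Real.sqrt b := Real.sqrt_le_sqrt hab
    have h2 : (0:ℝ) ≤ Real.sqrt |a - b| := Real.sqrt_nonneg _
    linarith
  · have habs : |a - b| = a - b := abs_of_pos (by linarith)
    rw [habs]
    rcases le_or_gt b 0 with hb | hb
    · rw [Real.sqrt_eq_zero'.mpr hb, sub_zero]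
      exact Real.sqrt_le_sqrt (by linarith)
    · have hb' : (0:ℝ) ≤ b := le_of_lt hb
      have hsum : a ≤ (Real.sqrt (a - b) + Real.sqrt b) ^ 2 := by
        have e1 : Real.sqrt (a - b) ^ 2 = a - b := Real.sq_sqrt (by linarith)
        have e2 : Real.sqrt b ^ 2 = b := Real.sq_sqrt hb'
        nlinarith [Real.sqrt_nonneg (a - b), Real.sqrt_nonneg b]
      have := Real.sqrt_le_sqrt hsum
      rw [Real.sqrt_sq (by positivity)] at this
      linarith

lemma abs_sqrt_sub_sqrt_le (a b : ℝ) :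
    |Real.sqrt a - Real.sqrt b| ≤ Real.sqrt |a - b| := by
  rw [abs_sub_le_iff]
  constructor
  · exact sqrt_sub_sqrt_le a b
  · rw [abs_sub_comm]
    exact sqrt_sub_sqrt_le b a



lemma per_gamma {n : ℕ} (ψ ψ' : (Fin n → Fin 2) → ℂ)
    (hψ : braket ψ ψ = 1) (hψ' : braket ψ' ψ' = 1) (γ : Finset (Fin n)) :
    |Real.sqrt (2 * (1 - purity (reduced γ ψ))) - Real.sqrt (2 * (1 - purity (reduced γ ψ')))|
      ≤ (2 : ℝ) ^ ((3 : ℝ) / 4) * Real.sqrt (traceNorm (dm ψ - dm ψ')) := by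
  set s : ℝ := ‖braket ψ ψ'‖ with hs
  set P : ℝ := purity (reduced γ ψ) with hP
  set P' : ℝ := purity (reduced γ ψ') with hP'
  set W : ℝ := Real.sqrt (2 * (1 - s ^ 2)) with hW
  have hW0 : 0 ≤ W := Real.sqrt_nonneg _
  have h3 : |P - P'| ≤ 2 * W := purity_diff hψ hψ' γ
  have hT : 2 * Real.sqrt (1 - s ^ 2) ≤ traceNorm (dm ψ - dm ψ') :=
    traceNorm_lower ψ ψ' hψ hψ'
  have hsqrt4 : Real.sqrt 4 = 2 := by
    rw [show (4:ℝ) = 2 ^ 2 by norm_num, Real.sqrt_sq (by norm_num : (0:ℝ) ≤ 2)]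
  have hWT : Real.sqrt 2 * W ≤ traceNorm (dm ψ - dm ψ') := by
    have e1 : Real.sqrt 2 * W = 2 * Real.sqrt (1 - s ^ 2) := by
      rw [hW, ← Real.sqrt_mul (by norm_num : (0:ℝ) ≤ 2),
        show (2:ℝ) * (2 * (1 - s ^ 2)) = 4 * (1 - s ^ 2) by ring,
        Real.sqrt_mul (by norm_num : (0:ℝ) ≤ 4), hsqrt4]
    rw [e1]; exact hT
  have h5 : Real.sqrt (Real.sqrt 2 * W) ≤ Real.sqrt (traceNorm (dm ψ - dm ψ')) :=
    Real.sqrt_le_sqrt hWT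
  have h6 : Real.sqrt (Real.sqrt 2 * W) = (2:ℝ) ^ ((1:ℝ)/4) * Real.sqrt W := by
    rw [Real.sqrt_mul (Real.sqrt_nonneg 2)]
    congr 1
    rw [Real.sqrt_eq_rpow, Real.sqrt_eq_rpow, ← Real.rpow_mul (by norm_num : (0:ℝ) ≤ 2)]
    norm_num
  have h7 : (2:ℝ) ^ ((3:ℝ)/4) * ((2:ℝ) ^ ((1:ℝ)/4) * Real.sqrt W) = 2 * Real.sqrt W := by
    rw [← mul_assoc, ← Real.rpow_add (by norm_num : (0:ℝ) < 2)]
    norm_num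
  calc |Real.sqrt (2 * (1 - P)) - Real.sqrt (2 * (1 - P'))|
      ≤ Real.sqrt |2 * (1 - P) - 2 * (1 - P')| := abs_sqrt_sub_sqrt_le _ _
    _ = Real.sqrt (2 * |P - P'|) := by
        rw [show 2 * (1 - P) - 2 * (1 - P') = 2 * (P' - P) by ring, abs_mul, abs_two,
          abs_sub_comm]
    _ ≤ Real.sqrt (2 * (2 * W)) := Real.sqrt_le_sqrt (by linarith)
    _ = 2 * Real.sqrt W := by
        rw [show (2:ℝ) * (2 * W) = 4 * W by ring,
          Real.sqrt_mul (by norm_num : (0:ℝ) ≤ 4), hsqrt4]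
    _ = (2:ℝ) ^ ((3:ℝ)/4) * ((2:ℝ) ^ ((1:ℝ)/4) * Real.sqrt W) := h7.symm
    _ = (2:ℝ) ^ ((3:ℝ)/4) * Real.sqrt (Real.sqrt 2 * W) := by rw [h6]
    _ ≤ (2:ℝ) ^ ((3:ℝ)/4) * Real.sqrt (traceNorm (dm ψ - dm ψ')) := by
        have h34 : (0:ℝ) ≤ (2:ℝ) ^ ((3:ℝ)/4) := le_of_lt (Real.rpow_pos_of_pos (by norm_num) _)
        exact mul_le_mul_of_nonneg_left h5 h34

end Aux

/-- Continuity of the GME-concurrence: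
`|C_GME(ψ) − C_GME(ψ')| ≤ 2^{3/4} √(‖ψ − ψ'‖₁)` for unit vectors `ψ, ψ' ∈ (ℂ²)^{⊗n}`. -/
theorem gme_continuity (n : ℕ) (hn : 2 ≤ n)
    (ψ ψ' : (Fin n → Fin 2) → ℂ) (hψ : braket ψ ψ = 1) (hψ' : braket ψ' ψ' = 1) :
    |gme ψ - gme ψ'| ≤ (2 : ℝ) ^ ((3 : ℝ) / 4) * Real.sqrt (traceNorm (dm ψ - dm ψ')) := by
  set D : ℝ := (2 : ℝ) ^ ((3 : ℝ) / 4) * Real.sqrt (traceNorm (dm ψ - dm ψ')) with hD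
  have hkey := per_gamma ψ ψ' hψ hψ'
  have hpos : 0 < n := by omega
  set γ0 : Finset (Fin n) := {(⟨0, hpos⟩ : Fin n)} with hγ0
  have hγ0ne : γ0 ≠ ∅ := Finset.singleton_ne_empty _
  have hγ0nu : γ0 ≠ Finset.univ := by
    intro h
    have hc := congrArg Finset.card h
    rw [hγ0, Finset.card_singleton, Finset.card_univ, Fintype.card_fin] at hc
    omega
  have hneS : ∀ χ : (Fin n → Fin 2) → ℂ,
      Set.Nonempty {r : ℝ | ∃ γ : Finset (Fin n), γ ≠ ∅ ∧ γ ≠ Finset.univ ∧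
        r = Real.sqrt (2 * (1 - purity (reduced γ χ)))} :=
    fun χ => ⟨_, ⟨γ0, hγ0ne, hγ0nu, rfl⟩⟩
  have hbdd : ∀ χ : (Fin n → Fin 2) → ℂ,
      BddBelow {r : ℝ | ∃ γ : Finset (Fin n), γ ≠ ∅ ∧ γ ≠ Finset.univ ∧
        r = Real.sqrt (2 * (1 - purity (reduced γ χ)))} := by
    intro χ
    refine ⟨0, ?_⟩
    rintro r ⟨γ, -, -, rfl⟩
    exact Real.sqrt_nonneg _
  have main : ∀ φ φ' : (Fin n → Fin 2) → ℂ, braket φ φ = 1 → braket φ' φ' = 1 →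
      (∀ γ : Finset (Fin n),
        |Real.sqrt (2 * (1 - purity (reduced γ φ))) -
          Real.sqrt (2 * (1 - purity (reduced γ φ')))| ≤ D) →
      gme φ - gme φ' ≤ D := by
    intro φ φ' hφ hφ' hk
    have hle : gme φ - D ≤ gme φ' := by
      unfold gme
      refine le_csInf (hneS φ') ?_
      rintro r ⟨γ, h1, h2, rfl⟩
      have hmem : Real.sqrt (2 * (1 - purity (reduced γ φ))) ∈
          {r : ℝ | ∃ γ : Finset (Fin n), γ ≠ ∅ ∧ γ ≠ Finset.univ ∧
            r = Real.sqrt (2 * (1 - purity (reduced γ φ)))} := ⟨γ, h1, h2, rfl⟩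
      have hinf : sInf {r : ℝ | ∃ γ : Finset (Fin n), γ ≠ ∅ ∧ γ ≠ Finset.univ ∧
          r = Real.sqrt (2 * (1 - purity (reduced γ φ)))}
            ≤ Real.sqrt (2 * (1 - purity (reduced γ φ))) := csInf_le (hbdd φ) hmem
      have habs := (abs_sub_le_iff.mp (hk γ)).1
      have : gme φ ≤ Real.sqrt (2 * (1 - purity (reduced γ φ))) := hinf
      linarith
    linarith
  rw [abs_sub_le_iff]
  constructor
  · exact main ψ ψ' hψ hψ' hkey
  · refine main ψ' ψ hψ' hψ ?_
    intro γ
    rw [abs_sub_comm]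
    exact hkey γ

end QIpaper
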